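/- Let R be an ℕ-graded ring generated in degree 1, i.e. R = ⊕_{n≥1} R(n) with R(n) = R(1)^n. If every homogeneous element of R is nilpotent and some element of R[X] (with X of degree 0, i.e. coefficients graded) that is homogeneous of positive degree is not nilpotent, then R[X] is not a Jacobson radical ring. -/

import Mathlib

/-- Iterated product in a non-unital ring: `npow x n = x^(n+1)`. -/
def npow {R : Type*} [NonUnitalRing R] (x : R) : ℕ → R
  | 0 => x
  | n + 1 => x * npow x n

section proj
variable {R : Type*} [NonUnitalRing R] (A : ℕ → AddSubgroup R) (hA : DirectSum.IsInternal A)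

set_option synthInstance.maxHeartbeats 1000000 in
noncomputable def gradeEquiv : (DirectSum ℕ (fun i => A i)) ≃+ R :=
  AddEquiv.ofBijective (DirectSum.coeAddMonoidHom A) hA

theorem gradeEquiv_of {m : ℕ} (a : A m) :
    gradeEquiv A hA (DirectSum.of (fun i => A i) m a) = (a : R) :=
  DirectSum.coeAddMonoidHom_of A m a

noncomputable def proj (k : ℕ) : R →+ R :=
  ((A k).subtype).comp ((DFinsupp.evalAddMonoidHom k).comp
    (gradeEquiv A hA).symm.toAddMonoidHom)

theorem proj_apply (k : ℕ) (x : R) :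
    proj A hA k x = (((gradeEquiv A hA).symm x) k : R) := rfl

theorem proj_mem (k : ℕ) (x : R) : proj A hA k x ∈ A k := SetLike.coe_mem _

theorem gradeEquiv_symm_of {m : ℕ} (x : R) (hx : x ∈ A m) :
    (gradeEquiv A hA).symm x = DirectSum.of (fun i => A i) m ⟨x, hx⟩ := by
  rw [AddEquiv.symm_apply_eq, gradeEquiv_of]

theorem proj_same {k : ℕ} (x : R) (hx : x ∈ A k) : proj A hA k x = x := by
  rw [proj_apply, gradeEquiv_symm_of A hA x hx, DirectSum.of_eq_same]

theorem proj_ne {m k : ℕ} (h : m ≠ k) (x : R) (hx : x ∈ A m) : proj A hA k x = 0 := by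
  rw [proj_apply, gradeEquiv_symm_of A hA x hx, DirectSum.of_eq_of_ne _ _ _ h.symm]
  rfl

theorem proj_zero_eq_zero (h0 : A 0 = ⊥) (x : R) : proj A hA 0 x = 0 := by
  have := proj_mem A hA 0 x
  rw [h0] at this
  simpa using this

theorem sum_proj (x : R) [∀ (i : ℕ) (y : A i), Decidable (y ≠ 0)] :
    ∑ i ∈ ((gradeEquiv A hA).symm x).support, proj A hA i x = x := by
  conv_rhs => rw [← (gradeEquiv A hA).apply_symm_apply x,
    ← DirectSum.sum_support_of ((gradeEquiv A hA).symm x)]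
  rw [map_sum]
  exact Finset.sum_congr rfl fun i _ => (gradeEquiv_of A hA _).symm

theorem proj_not_mem_support (x : R) [∀ (i : ℕ) (y : A i), Decidable (y ≠ 0)]
    {k : ℕ} (hk : k ∉ ((gradeEquiv A hA).symm x).support) : proj A hA k x = 0 := by
  rw [proj_apply]
  rw [DFinsupp.notMem_support_iff] at hk
  rw [hk]
  rfl

theorem proj_bound (x : R) : ∃ N : ℕ, ∀ k ≥ N, proj A hA k x = 0 := by
  classical
  refine ⟨((gradeEquiv A hA).symm x).support.sup id + 1, fun k hk => ?_⟩
  apply proj_not_mem_support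
  intro hmem
  have := Finset.le_sup (f := id) hmem
  simp only [id_eq] at this
  omega

theorem proj_mul_left (hmul : ∀ m n : ℕ, ∀ a ∈ A m, ∀ b ∈ A n, a * b ∈ A (m + n))
    {m : ℕ} (a : R) (ha : a ∈ A m) (b : R) (j : ℕ) :
    proj A hA (m + j) (a * b) = a * proj A hA j b := by
  classical
  conv_lhs => rw [← sum_proj A hA b, Finset.mul_sum, map_sum]
  rw [Finset.sum_congr rfl (fun i (_ : i ∈ ((gradeEquiv A hA).symm b).support) =>
    (show proj A hA (m + j) (a * proj A hA i b) = if i = j then a * proj A hA j b else 0 by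
      split_ifs with h
      · subst h; exact proj_same A hA _ (hmul m i a ha _ (proj_mem A hA i b))
      · exact proj_ne A hA (by omega) _ (hmul m i a ha _ (proj_mem A hA i b))))]
  rw [Finset.sum_ite_eq' _ j]
  split_ifs with h
  · rfl
  · rw [proj_not_mem_support A hA b h, mul_zero]

end proj

/-- The polynomial ring `P[X]` over a possibly non-unital ring `P`, realized as
the non-unital subring of `(Unitization ℤ P)[X]` of polynomials all of whose
coefficients lie in `P` (i.e. have zero scalar part). -/
def polyNU (P : Type*) [NonUnitalRing P] :
    NonUnitalSubring (@Polynomial (Unitization ℤ P) Ring.toSemiring) where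
  carrier := {f | ∀ n : ℕ, (f.coeff n).fst = 0}
  add_mem' := by
    intro a b ha hb n
    simp [ha n, hb n]
  zero_mem' := by intro n; simp
  neg_mem' := by
    intro a ha n
    simp [ha n]
  mul_mem' := by
    intro a b ha hb n
    rw [Polynomial.coeff_mul]
    have : ((∑ x ∈ Finset.HasAntidiagonal.antidiagonal n, a.coeff x.1 * b.coeff x.2).fst)
        = ∑ x ∈ Finset.HasAntidiagonal.antidiagonal n, (a.coeff x.1 * b.coeff x.2).fst :=
      map_sum (Unitization.fstHom ℤ P) _ _
    rw [this]
    apply Finset.sum_eq_zero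
    intro x _
    simp [ha x.1]

section poly
variable {R : Type*} [NonUnitalRing R]

/-- `snd` as an additive monoid hom. -/
def sndAddHom : Unitization ℤ R →+ R :=
  AddMonoidHom.mk' (fun x : Unitization ℤ R => x.snd) (fun _ _ => rfl)

theorem snd_finset_sum {ι : Type*} (s : Finset ι) (f : ι → Unitization ℤ R) :
    (∑ x ∈ s, f x).snd = ∑ x ∈ s, (f x).snd :=
  map_sum (sndAddHom) f s

theorem mem_polyNU (x : polyNU R) : ∀ t : ℕ, ((x : Polynomial (Unitization ℤ R)).coeff t).fst = 0 :=
  x.2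

theorem coe_npow (k : ℕ) (x : polyNU R) :
    ((npow x k : polyNU R) : Polynomial (Unitization ℤ R))
      = (x : Polynomial (Unitization ℤ R)) ^ (k + 1) := by
  induction k with
  | zero => simp [npow]
  | succ m ih =>
    show ((x * npow x m : polyNU R) : Polynomial (Unitization ℤ R)) = _
    rw [MulMemClass.coe_mul, ih, ← pow_succ']

theorem snd_coeff_mul (F G : Polynomial (Unitization ℤ R))
    (hF : ∀ t, (F.coeff t).fst = 0) (hG : ∀ t, (G.coeff t).fst = 0) (t : ℕ) :
    ((F * G).coeff t).snd
      = ∑ x ∈ Finset.HasAntidiagonal.antidiagonal t, (F.coeff x.1).snd * (G.coeff x.2).snd := by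
  rw [Polynomial.coeff_mul, snd_finset_sum]
  exact Finset.sum_congr rfl fun x _ => by simp [hF x.1, hG x.2]

end poly

/-- `R` graded in positive degrees with every homogeneous element nilpotent:
if some homogeneous element of positive degree of `R[X]` (with `X` of degree `0`)
is not nilpotent, then `R[X]` is not Jacobson radical. -/
theorem poly_not_radical_of_homogeneous_nonnilpotent {R : Type*} [NonUnitalRing R]
    (A : ℕ → AddSubgroup R)
    (hinternal : DirectSum.IsInternal A)
    (hmul : ∀ m n : ℕ, ∀ a ∈ A m, ∀ b ∈ A n, a * b ∈ A (m + n))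
    (h0 : A 0 = ⊥)
    (hgen : ∀ n : ℕ, 1 ≤ n → A (n + 1) =
      AddSubgroup.closure {z : R | ∃ x ∈ A n, ∃ y ∈ A 1, z = x * y})
    (hnil : ∀ n : ℕ, ∀ x ∈ A n, ∃ k : ℕ, npow x k = 0)
    (hex : ∃ p : (polyNU R), (∃ n : ℕ, 1 ≤ n ∧
        ∀ k : ℕ, ((p : Polynomial (Unitization ℤ R)).coeff k).snd ∈ A n) ∧
      ¬∃ m : ℕ, npow p m = 0) :
    ¬∀ f : (polyNU R), ∃ g : (polyNU R), f + g + f * g = 0 := by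
  classical
  intro hJ
  obtain ⟨p, ⟨n, hn1, hpn⟩, hnotnil⟩ := hex
  apply hnotnil
  obtain ⟨g, hg⟩ := hJ p
  set P : Polynomial (Unitization ℤ R) := (p : Polynomial (Unitization ℤ R)) with hPdef
  set Q : Polynomial (Unitization ℤ R) := (g : Polynomial (Unitization ℤ R)) with hQdef
  have hP0 : ∀ t, (P.coeff t).fst = 0 := mem_polyNU p
  have hQ0 : ∀ t, (Q.coeff t).fst = 0 := mem_polyNU g
  have hPk0 : ∀ k t, ((P ^ (k + 1)).coeff t).fst = 0 := by
    intro k t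
    rw [← coe_npow k p]
    exact mem_polyNU _ t
  -- homogeneity of powers
  have hPkn : ∀ k t, ((P ^ (k + 1)).coeff t).snd ∈ A ((k + 1) * n) := by
    intro k
    induction k with
    | zero => intro t; simpa using hpn t
    | succ m ih =>
      intro t
      rw [pow_succ', snd_coeff_mul P (P ^ (m + 1)) hP0 (hPk0 m) t]
      apply AddSubgroup.sum_mem
      intro x _
      have h := hmul n ((m + 1) * n) _ (hpn x.1) _ (ih x.2)
      have he : n + (m + 1) * n = (m + 1 + 1) * n := by ring
      rwa [he] at h
  -- the quasi-regularity equation, coefficientwise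
  have hPQ : P + Q + P * Q = 0 := by
    have h := congrArg Subtype.val hg
    push_cast at h
    exact h
  have hcoeff : ∀ t, (P.coeff t).snd + (Q.coeff t).snd
      + ∑ x ∈ Finset.HasAntidiagonal.antidiagonal t, (P.coeff x.1).snd * (Q.coeff x.2).snd = 0 := by
    intro t
    have h1 := congrArg (fun F : Polynomial (Unitization ℤ R) => (F.coeff t).snd) hPQ
    simp only [Polynomial.coeff_add, Polynomial.coeff_zero, Unitization.snd_add,
      Unitization.snd_zero] at h1
    rw [← snd_coeff_mul P Q hP0 hQ0 t]
    exact h1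
  -- key induction
  have key : ∀ k t, proj A hinternal ((k + 1) * n) ((Q.coeff t).snd)
      = ((-1) ^ (k + 1) : ℤ) • (((P ^ (k + 1)).coeff t).snd) := by
    intro k
    induction k with
    | zero =>
      intro t
      have h1 : proj A hinternal n ((P.coeff t).snd)
          + proj A hinternal n ((Q.coeff t).snd)
          + proj A hinternal n (∑ x ∈ Finset.HasAntidiagonal.antidiagonal t,
              (P.coeff x.1).snd * (Q.coeff x.2).snd) = 0 := by
        rw [← map_add, ← map_add, hcoeff t, map_zero]
      rw [proj_same A hinternal _ (hpn t)] at h1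
      have e2 : proj A hinternal n (∑ x ∈ Finset.HasAntidiagonal.antidiagonal t,
          (P.coeff x.1).snd * (Q.coeff x.2).snd) = 0 := by
        rw [map_sum]
        apply Finset.sum_eq_zero
        intro x _
        have h := proj_mul_left A hinternal hmul ((P.coeff x.1).snd) (hpn x.1)
          ((Q.coeff x.2).snd) 0
        rw [add_zero] at h
        rw [h, proj_zero_eq_zero A hinternal h0, mul_zero]
      rw [e2, add_zero] at h1
      rw [show (0 : ℕ) + 1 = 1 from rfl, pow_one, pow_one, one_mul]
      rw [neg_one_zsmul]
      exact eq_neg_of_add_eq_zero_right h1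
    | succ m ih =>
      intro t
      have hlt : n < (m + 1 + 1) * n := by nlinarith
      have h1 : proj A hinternal ((m + 1 + 1) * n) ((P.coeff t).snd)
          + proj A hinternal ((m + 1 + 1) * n) ((Q.coeff t).snd)
          + proj A hinternal ((m + 1 + 1) * n) (∑ x ∈ Finset.HasAntidiagonal.antidiagonal t,
              (P.coeff x.1).snd * (Q.coeff x.2).snd) = 0 := by
        rw [← map_add, ← map_add, hcoeff t, map_zero]
      rw [proj_ne A hinternal (by omega) _ (hpn t)] at h1
      have e2 : proj A hinternal ((m + 1 + 1) * n) (∑ x ∈ Finset.HasAntidiagonal.antidiagonal t,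
          (P.coeff x.1).snd * (Q.coeff x.2).snd)
          = ((-1) ^ (m + 1) : ℤ) • (((P ^ (m + 1 + 1)).coeff t).snd) := by
        rw [map_sum]
        have he : ∀ x ∈ Finset.HasAntidiagonal.antidiagonal t,
            proj A hinternal ((m + 1 + 1) * n) ((P.coeff x.1).snd * (Q.coeff x.2).snd)
            = ((-1) ^ (m + 1) : ℤ) • ((P.coeff x.1).snd * ((P ^ (m + 1)).coeff x.2).snd) := by
          intro x _
          have h := proj_mul_left A hinternal hmul ((P.coeff x.1).snd) (hpn x.1)
            ((Q.coeff x.2).snd) ((m + 1) * n)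
          rw [show n + (m + 1) * n = (m + 1 + 1) * n by ring] at h
          rw [h, ih x.2, mul_smul_comm]
        rw [Finset.sum_congr rfl he, ← Finset.smul_sum,
          pow_succ' P (m + 1), snd_coeff_mul P (P ^ (m + 1)) hP0 (hPk0 m) t]
      rw [e2, zero_add] at h1
      have h2 := eq_neg_of_add_eq_zero_left h1
      rw [h2, show ((-1 : ℤ)) ^ (m + 1 + 1) = (-1) * (-1) ^ (m + 1) from pow_succ' _ _,
        mul_smul, neg_one_zsmul]
  -- finiteness: pick a uniform bound
  choose Nf hNf using fun t => proj_bound A hinternal ((Q.coeff t).snd)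
  set d := Q.natDegree with hd
  set N := (Finset.range (d + 1)).sup Nf with hN
  refine ⟨N, ?_⟩
  have hzero : ∀ t, proj A hinternal ((N + 1) * n) ((Q.coeff t).snd) = 0 := by
    intro t
    by_cases ht : t ≤ d
    · apply hNf t
      have h1 : Nf t ≤ N := Finset.le_sup (Finset.mem_range.mpr (by omega))
      have h2 : N + 1 ≤ (N + 1) * n := by nlinarith
      omega
    · rw [Polynomial.coeff_eq_zero_of_natDegree_lt (by omega)]
      rw [Unitization.snd_zero, map_zero]
  have hsnd : ∀ t, ((P ^ (N + 1)).coeff t).snd = 0 := by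
    intro t
    have h := (key N t).symm
    rw [hzero t] at h
    rcases Nat.even_or_odd (N + 1) with he | ho
    · rwa [he.neg_one_pow, one_smul] at h
    · rw [ho.neg_one_pow, neg_one_zsmul] at h
      exact neg_eq_zero.mp h
  have hpow : P ^ (N + 1) = 0 := by
    ext t
    · exact hPk0 N t
    · rw [hsnd t]; simp
  apply Subtype.ext
  rw [coe_npow N p, ← hPdef, hpow]
  rfl
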